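/- Let C be a cosine family on a Banach space X satisfying ‖C(t) − I‖ ≤ r for all t ≥ 0. Define C_ext on ℓ²(ℕ; X) by C_ext(t)(x_n) = (C(n t) x_n). Then C_ext is a cosine family on ℓ²(ℕ;X) satisfying ‖C_ext(t) − I‖ ≤ r for all t ≥ 0, and if C is strongly continuous then so is C_ext. -/

import Mathlib

open scoped ENNReal

section Aux

variable {X : Type*} [NormedAddCommGroup X] [NormedSpace ℝ X]

private lemma two_toReal : ((2 : ℝ≥0∞)).toReal = 2 := by norm_num

private lemma sum_bound {M : ℝ} (hM : 0 ≤ M) (x : lp (fun _ : ℕ => X) 2) (f : ∀ _ : ℕ, X)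
    (h : ∀ n, ‖f n‖ ≤ M * ‖(x : ∀ _ : ℕ, X) n‖) (s : Finset ℕ) :
    ∑ i ∈ s, ‖f i‖ ^ ((2 : ℝ≥0∞)).toReal ≤ (M * ‖x‖) ^ ((2 : ℝ≥0∞)).toReal := by
  have hp : (0 : ℝ) < ((2 : ℝ≥0∞)).toReal := by norm_num
  calc ∑ i ∈ s, ‖f i‖ ^ ((2 : ℝ≥0∞)).toReal
      ≤ ∑ i ∈ s, (M * ‖(x : ∀ _ : ℕ, X) i‖) ^ ((2 : ℝ≥0∞)).toReal := by
        refine Finset.sum_le_sum fun i _ => ?_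
        exact Real.rpow_le_rpow (norm_nonneg _) (h i) hp.le
    _ = M ^ ((2 : ℝ≥0∞)).toReal * ∑ i ∈ s, ‖(x : ∀ _ : ℕ, X) i‖ ^ ((2 : ℝ≥0∞)).toReal := by
        rw [Finset.mul_sum]
        exact Finset.sum_congr rfl fun i _ => Real.mul_rpow hM (norm_nonneg _)
    _ ≤ M ^ ((2 : ℝ≥0∞)).toReal * ‖x‖ ^ ((2 : ℝ≥0∞)).toReal := by
        refine mul_le_mul_of_nonneg_left ?_ (Real.rpow_nonneg hM _)
        exact lp.sum_rpow_le_norm_rpow hp x s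
    _ = (M * ‖x‖) ^ ((2 : ℝ≥0∞)).toReal := (Real.mul_rpow hM (norm_nonneg _)).symm

private lemma memℓp_pointwise {M : ℝ} (hM : 0 ≤ M) (x : lp (fun _ : ℕ => X) 2) (f : ∀ _ : ℕ, X)
    (h : ∀ n, ‖f n‖ ≤ M * ‖(x : ∀ _ : ℕ, X) n‖) : Memℓp f 2 :=
  memℓp_gen' (sum_bound hM x f h)

private lemma lp_norm_le {M : ℝ} (hM : 0 ≤ M) (f x : lp (fun _ : ℕ => X) 2)
    (h : ∀ n, ‖(f : ∀ _ : ℕ, X) n‖ ≤ M * ‖(x : ∀ _ : ℕ, X) n‖) : ‖f‖ ≤ M * ‖x‖ := by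
  have hp : (0 : ℝ) < ((2 : ℝ≥0∞)).toReal := by norm_num
  exact lp.norm_le_of_forall_sum_le hp (mul_nonneg hM (norm_nonneg _))
    (sum_bound hM x _ h)

/-- The diagonal operator on `ℓ²` built from a uniformly bounded family of operators. -/
private noncomputable def lpOp (T : ℕ → X →L[ℝ] X) (M : ℝ) (hM : 0 ≤ M)
    (hT : ∀ n, ‖T n‖ ≤ M) : lp (fun _ : ℕ => X) 2 →L[ℝ] lp (fun _ : ℕ => X) 2 :=
  LinearMap.mkContinuous
    { toFun := fun x => ⟨fun n => T n ((x : ∀ _ : ℕ, X) n),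
        memℓp_pointwise hM x _ fun n =>
          ((T n).le_opNorm _).trans
            (mul_le_mul_of_nonneg_right (hT n) (norm_nonneg _))⟩
      map_add' := by
        intro x y
        apply Subtype.ext
        funext n
        simp only [lp.coeFn_add, Pi.add_apply, map_add]
      map_smul' := by
        intro c x
        apply Subtype.ext
        funext n
        simp only [lp.coeFn_smul, Pi.smul_apply, map_smul, RingHom.id_apply] }
    M
    (by
      intro x
      exact lp_norm_le hM _ x fun n =>
        ((T n).le_opNorm _).trans (mul_le_mul_of_nonneg_right (hT n) (norm_nonneg _)))

private lemma lpOp_apply (T : ℕ → X →L[ℝ] X) (M : ℝ) (hM : 0 ≤ M) (hT : ∀ n, ‖T n‖ ≤ M)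
    (x : lp (fun _ : ℕ => X) 2) (n : ℕ) :
    ((lpOp T M hM hT x : lp (fun _ : ℕ => X) 2) : ∀ _ : ℕ, X) n = T n ((x : ∀ _ : ℕ, X) n) :=
  rfl

private lemma lpOp_norm_le (T : ℕ → X →L[ℝ] X) (M : ℝ) (hM : 0 ≤ M) (hT : ∀ n, ‖T n‖ ≤ M) :
    ‖lpOp T M hM hT‖ ≤ M :=
  LinearMap.mkContinuous_norm_le _ hM _

private lemma single_sub (i : ℕ) (a b : X) :
    lp.single (E := fun _ : ℕ => X) 2 i a - lp.single 2 i b = lp.single 2 i (a - b) := by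
  apply Subtype.ext
  funext j
  rw [lp.coeFn_sub]
  show (lp.single (E := fun _ : ℕ => X) 2 i a : ∀ _ : ℕ, X) j
      - (lp.single (E := fun _ : ℕ => X) 2 i b : ∀ _ : ℕ, X) j
      = (lp.single (E := fun _ : ℕ => X) 2 i (a - b) : ∀ _ : ℕ, X) j
  by_cases h : j = i
  · subst h
    rw [lp.single_apply_self, lp.single_apply_self, lp.single_apply_self]
  · rw [lp.single_apply_ne _ _ _ h, lp.single_apply_ne _ _ _ h, lp.single_apply_ne _ _ _ h,
      sub_zero]

private lemma isometry_single (i : ℕ) : Isometry (lp.single (E := fun _ : ℕ => X) 2 i) := by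
  refine Isometry.of_dist_eq fun a b => ?_
  rw [dist_eq_norm, dist_eq_norm, single_sub]
  exact lp.norm_single (E := fun _ : ℕ => X) (p := 2) (by norm_num) i (a - b)

end Aux

theorem extended_cosine_family {X : Type*} [NormedAddCommGroup X] [NormedSpace ℝ X]
    (C : ℝ → X →L[ℝ] X) (h0 : C 0 = 1)
    (hd : ∀ t s : ℝ, (2 : ℝ) • (C t * C s) = C (t + s) + C (t - s))
    (r : ℝ) (hbound : ∀ t : ℝ, 0 ≤ t → ‖C t - 1‖ ≤ r) :
    ∃ Cext : ℝ → (lp (fun _ : ℕ => X) 2 →L[ℝ] lp (fun _ : ℕ => X) 2),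
      (∀ (t : ℝ) (x : lp (fun _ : ℕ => X) 2) (n : ℕ),
        (Cext t x : ∀ _ : ℕ, X) n = C (n * t) ((x : ∀ _ : ℕ, X) n)) ∧
      Cext 0 = 1 ∧
      (∀ t s : ℝ, (2 : ℝ) • (Cext t * Cext s) = Cext (t + s) + Cext (t - s)) ∧
      (∀ t : ℝ, 0 ≤ t → ‖Cext t - 1‖ ≤ r) ∧
      ((∀ x : X, Continuous fun t : ℝ => C t x) →
        ∀ y : lp (fun _ : ℕ => X) 2, Continuous fun t : ℝ => Cext t y) := by
  -- r is nonnegative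
  have hr0 : 0 ≤ r := by
    have := hbound 0 le_rfl
    rw [h0, sub_self, norm_zero] at this
    exact this
  -- C is even
  have heven : ∀ u : ℝ, C (-u) = C u := by
    intro u
    have h := hd 0 u
    rw [h0, one_mul, zero_add, zero_sub] at h
    have : C u + C u = C u + C (-u) := by
      rw [← h]; rw [two_smul]
    exact (add_left_cancel this).symm
  -- bound for all real arguments
  have hCb : ∀ u : ℝ, ‖C u - 1‖ ≤ r := by
    intro u
    rcases le_total 0 u with h | h
    · exact hbound u h
    · have := hbound (-u) (by linarith)
      rwa [heven] at this
  have hCM : ∀ u : ℝ, ‖C u‖ ≤ 1 + r := by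
    intro u
    calc ‖C u‖ = ‖(C u - 1) + 1‖ := by rw [sub_add_cancel]
      _ ≤ ‖C u - 1‖ + ‖(1 : X →L[ℝ] X)‖ := norm_add_le _ _
      _ ≤ r + 1 := add_le_add (hCb u)
          (by rw [ContinuousLinearMap.one_def]; exact ContinuousLinearMap.norm_id_le)
      _ = 1 + r := by ring
  have hM1 : (0:ℝ) ≤ 1 + r := by linarith
  set Cex : ℝ → (lp (fun _ : ℕ => X) 2 →L[ℝ] lp (fun _ : ℕ => X) 2) :=
    fun t => lpOp (fun n => C (n * t)) (1 + r) hM1 (fun n => hCM _) with hCexdef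
  have hcoord : ∀ (t : ℝ) (x : lp (fun _ : ℕ => X) 2) (n : ℕ),
      (Cex t x : ∀ _ : ℕ, X) n = C (n * t) ((x : ∀ _ : ℕ, X) n) := fun t x n => rfl
  refine ⟨Cex, hcoord, ?_, ?_, ?_, ?_⟩
  · -- Cex 0 = 1
    refine ContinuousLinearMap.ext fun x => Subtype.ext (funext fun n => ?_)
    show C ((n : ℝ) * 0) ((x : ∀ _ : ℕ, X) n)
        = ((1 : lp (fun _ : ℕ => X) 2 →L[ℝ] lp (fun _ : ℕ => X) 2) x : ∀ _ : ℕ, X) n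
    rw [mul_zero, h0, ContinuousLinearMap.one_apply, ContinuousLinearMap.one_apply]
  · -- cosine functional equation
    intro t s
    refine ContinuousLinearMap.ext fun x => Subtype.ext (funext fun n => ?_)
    have hkey := ContinuousLinearMap.ext_iff.mp (hd (n * t) (n * s)) ((x : ∀ _ : ℕ, X) n)
    simp only [ContinuousLinearMap.smul_apply, ContinuousLinearMap.mul_apply,
      ContinuousLinearMap.add_apply] at hkey
    show (((2 : ℝ) • ((Cex t) ((Cex s) x)) : lp (fun _ : ℕ => X) 2) : ∀ _ : ℕ, X) n
        = ((((Cex (t + s)) x + (Cex (t - s)) x) : lp (fun _ : ℕ => X) 2) : ∀ _ : ℕ, X) n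
    rw [lp.coeFn_smul, lp.coeFn_add]
    show (2 : ℝ) • C ((n : ℝ) * t) (C ((n : ℝ) * s) ((x : ∀ _ : ℕ, X) n))
        = C ((n : ℝ) * (t + s)) ((x : ∀ _ : ℕ, X) n)
          + C ((n : ℝ) * (t - s)) ((x : ∀ _ : ℕ, X) n)
    rw [mul_add, mul_sub]
    exact hkey
  · -- norm bound
    intro t _
    refine ContinuousLinearMap.opNorm_le_bound _ hr0 fun x => ?_
    refine lp_norm_le hr0 _ x fun n => ?_
    have h1 : (((Cex t - 1) x : lp (fun _ : ℕ => X) 2) : ∀ _ : ℕ, X) n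
        = (C ((n : ℝ) * t) - 1) ((x : ∀ _ : ℕ, X) n) := by
      show ((Cex t x - x : lp (fun _ : ℕ => X) 2) : ∀ _ : ℕ, X) n
          = (C ((n : ℝ) * t) - 1) ((x : ∀ _ : ℕ, X) n)
      rw [lp.coeFn_sub]
      show C ((n : ℝ) * t) ((x : ∀ _ : ℕ, X) n) - (x : ∀ _ : ℕ, X) n = _
      rw [ContinuousLinearMap.sub_apply, ContinuousLinearMap.one_apply]
    rw [h1]
    calc ‖(C ((n : ℝ) * t) - 1) ((x : ∀ _ : ℕ, X) n)‖
        ≤ ‖C ((n : ℝ) * t) - 1‖ * ‖(x : ∀ _ : ℕ, X) n‖ := (C ((n : ℝ) * t) - 1).le_opNorm _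
      _ ≤ r * ‖(x : ∀ _ : ℕ, X) n‖ :=
          mul_le_mul_of_nonneg_right (hCb _) (norm_nonneg _)
  · -- strong continuity
    intro hsc y
    classical
    have hsing : ∀ (t : ℝ) (i : ℕ) (v : X),
        Cex t (lp.single 2 i v) = lp.single 2 i (C (i * t) v) := by
      intro t i v
      apply Subtype.ext
      funext j
      show C ((j : ℝ) * t) ((lp.single (E := fun _ : ℕ => X) 2 i v : ∀ _ : ℕ, X) j)
          = (lp.single (E := fun _ : ℕ => X) 2 i (C ((i : ℝ) * t) v) : ∀ _ : ℕ, X) j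
      by_cases h : j = i
      · subst h
        rw [lp.single_apply_self, lp.single_apply_self]
      · rw [lp.single_apply_ne _ _ _ h, lp.single_apply_ne _ _ _ h, map_zero]
    set F : Finset ℕ → ℝ → lp (fun _ : ℕ => X) 2 :=
      fun s t => Cex t (∑ i ∈ s, lp.single 2 i ((y : ∀ _ : ℕ, X) i)) with hF
    have hFc : ∀ s : Finset ℕ, Continuous (F s) := by
      intro s
      have hFeq : F s = fun t => ∑ i ∈ s, lp.single 2 i (C ((i : ℝ) * t) ((y : ∀ _ : ℕ, X) i)) := by
        funext t
        show Cex t (∑ i ∈ s, lp.single 2 i ((y : ∀ _ : ℕ, X) i))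
            = ∑ i ∈ s, lp.single 2 i (C ((i : ℝ) * t) ((y : ∀ _ : ℕ, X) i))
        rw [map_sum]
        exact Finset.sum_congr rfl fun i _ => hsing t i _
      rw [hFeq]
      refine continuous_finset_sum s fun i _ => ?_
      exact (isometry_single i).continuous.comp
        ((hsc ((y : ∀ _ : ℕ, X) i)).comp (continuous_const.mul continuous_id))
    have hsum := lp.hasSum_single (by norm_num : (2 : ℝ≥0∞) ≠ ⊤) y
    have h2 : Filter.Tendsto
        (fun s : Finset ℕ => ‖y - ∑ i ∈ s, lp.single 2 i ((y : ∀ _ : ℕ, X) i)‖)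
        Filter.atTop (nhds 0) := by
      have := (Filter.Tendsto.sub (tendsto_const_nhds (x := y)) hsum).norm
      simpa using this
    have hTU : TendstoUniformly F (fun t => Cex t y) Filter.atTop := by
      rw [Metric.tendstoUniformly_iff]
      intro ε hε
      have h2r : (0:ℝ) < 2 + r := by linarith
      have hδ : (0:ℝ) < ε / (2 + r) := div_pos hε h2r
      filter_upwards [h2.eventually (gt_mem_nhds hδ)] with s hs t
      have hnorm : ‖Cex t‖ ≤ 1 + r := lpOp_norm_le _ _ _ _
      calc dist (Cex t y) (F s t)
          = ‖Cex t (y - ∑ i ∈ s, lp.single 2 i ((y : ∀ _ : ℕ, X) i))‖ := by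
            rw [dist_eq_norm, hF, ← map_sub]
        _ ≤ ‖Cex t‖ * ‖y - ∑ i ∈ s, lp.single 2 i ((y : ∀ _ : ℕ, X) i)‖ :=
            (Cex t).le_opNorm _
        _ ≤ (1 + r) * ‖y - ∑ i ∈ s, lp.single 2 i ((y : ∀ _ : ℕ, X) i)‖ :=
            mul_le_mul_of_nonneg_right hnorm (norm_nonneg _)
        _ < (1 + r) * (ε / (2 + r)) := by
            exact mul_lt_mul_of_pos_left hs (by linarith)
        _ < (2 + r) * (ε / (2 + r)) := by
            exact mul_lt_mul_of_pos_right (by linarith) hδ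
        _ = ε := by field_simp
    exact hTU.continuous (Filter.Eventually.of_forall hFc).frequently
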